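/- Let C be an additive category, f₁ : X₁ → Y₁ and f₂ : X₂ → Y₂ two morphisms, and C an object. Then the direct sum morphism f₁ ⊕ f₂ : X₁ ⊕ X₂ → Y₁ ⊕ Y₂ is right C-determined if and only if both f₁ and f₂ are right C-determined. -/
import Mathlib


open CategoryTheory CategoryTheory.Limits

universe v u u'

variable {C : Type u} [Category.{v} C]

/-- `f` is right `Cd`-determined. -/
def RightDetermined {X Y : C} (f : X ⟶ Y) (Cd : C) : Prop :=
  ∀ ⦃T : C⦄ (g : T ⟶ Y), (∀ h : Cd ⟶ T, ∃ s : Cd ⟶ X, h ≫ g = s ≫ f) →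
    ∃ t : T ⟶ X, g = t ≫ f

def LeftDetermined {X Y : C} (f : X ⟶ Y) (Kd : C) : Prop :=
  ∀ ⦃T : C⦄ (g : X ⟶ T), (∀ h : T ⟶ Kd, ∃ s : Y ⟶ Kd, g ≫ h = f ≫ s) →
    ∃ t : Y ⟶ T, g = f ≫ t

def IsSummand (Z X : C) : Prop := ∃ (s : Z ⟶ X) (r : X ⟶ Z), s ≫ r = 𝟙 Z

section Preadd
variable [Preadditive C]

/-- membership in the radical of the category, via the Jacobson radical of `End`. -/
def radHom {T Z : C} (h : T ⟶ Z) : Prop :=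
  ∀ u : Z ⟶ T, (u ≫ h : CategoryTheory.End Z) ∈ Ideal.jacobson (⊥ : Ideal (CategoryTheory.End Z))

def AlmostFactorsThrough {X Y Z : C} (g : Z ⟶ Y) (f : X ⟶ Y) : Prop :=
  ¬ (∃ s : Z ⟶ X, g = s ≫ f) ∧
    ∀ ⦃T : C⦄ (h : T ⟶ Z), radHom h → ∃ s : T ⟶ X, h ≫ g = s ≫ f

def Indec (Z : C) : Prop :=
  ¬ Limits.IsZero Z ∧ ∀ e : Z ⟶ Z, e ≫ e = e → e = 0 ∨ e = 𝟙 Z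

end Preadd

def RightAlmostSplit {E Y : C} (d : E ⟶ Y) : Prop :=
  ¬ (∃ s : Y ⟶ E, s ≫ d = 𝟙 Y) ∧
    ∀ ⦃T : C⦄ (g : T ⟶ Y), ¬ (∃ s : Y ⟶ T, s ≫ g = 𝟙 Y) → ∃ t : T ⟶ E, t ≫ d = g

def LeftAlmostSplit {X E : C} (i : X ⟶ E) : Prop :=
  ¬ (∃ r : E ⟶ X, i ≫ r = 𝟙 X) ∧
    ∀ ⦃T : C⦄ (g : X ⟶ T), ¬ (∃ r : T ⟶ X, g ≫ r = 𝟙 X) → ∃ t : E ⟶ T, i ≫ t = g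

def RightMinimal {X Y : C} (f : X ⟶ Y) : Prop :=
  ∀ g : X ⟶ X, g ≫ f = f → IsIso g

def RightEquiv {X X' Y : C} (f : X ⟶ Y) (f' : X' ⟶ Y) : Prop :=
  (∃ u : X ⟶ X', f = u ≫ f') ∧ (∃ v : X' ⟶ X, f' = v ≫ f)

/-- A Quillen exact structure on an additive category. -/
class ExactStruct (C : Type u) [Category.{v} C] [Preadditive C] [HasZeroObject C]
    [HasBinaryBiproducts C] where
  IsConflation : ∀ {X E Y : C}, (X ⟶ E) → (E ⟶ Y) → Prop
  comp_zero : ∀ {X E Y : C} {i : X ⟶ E} {d : E ⟶ Y}, IsConflation i d → i ≫ d = 0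
  isKernel : ∀ {X E Y : C} {i : X ⟶ E} {d : E ⟶ Y}, IsConflation i d →
    ∀ {T : C} (g : T ⟶ E), g ≫ d = 0 → ∃! t : T ⟶ X, t ≫ i = g
  isCokernel : ∀ {X E Y : C} {i : X ⟶ E} {d : E ⟶ Y}, IsConflation i d →
    ∀ {T : C} (g : E ⟶ T), i ≫ g = 0 → ∃! t : Y ⟶ T, d ≫ t = g
  split_conflation : ∀ X Y : C, IsConflation (biprod.inl : X ⟶ X ⊞ Y) (biprod.snd : X ⊞ Y ⟶ Y)
  defl_comp : ∀ {X Y Z : C} (d : X ⟶ Y) (d' : Y ⟶ Z),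
    (∃ (K : C) (i : K ⟶ X), IsConflation i d) → (∃ (K : C) (i : K ⟶ Y), IsConflation i d') →
    ∃ (K : C) (i : K ⟶ X), IsConflation i (d ≫ d')
  infl_comp : ∀ {X Y Z : C} (i : X ⟶ Y) (i' : Y ⟶ Z),
    (∃ (W : C) (d : Y ⟶ W), IsConflation i d) → (∃ (W : C) (d : Z ⟶ W), IsConflation i' d) →
    ∃ (W : C) (d : Z ⟶ W), IsConflation (i ≫ i') d
  pullback_defl : ∀ {X Y Z : C} (d : X ⟶ Y) (g : Z ⟶ Y),
    (∃ (K : C) (i : K ⟶ X), IsConflation i d) →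
    ∃ (E : C) (g' : E ⟶ X) (d' : E ⟶ Z), IsPullback g' d' d g ∧
      ∃ (K : C) (i : K ⟶ E), IsConflation i d'
  pushout_infl : ∀ {X Y Z : C} (i : X ⟶ Y) (g : X ⟶ Z),
    (∃ (W : C) (d : Y ⟶ W), IsConflation i d) →
    ∃ (E : C) (i' : Z ⟶ E) (g' : Y ⟶ E), IsPushout i g g' i' ∧
      ∃ (W : C) (d : E ⟶ W), IsConflation i' d

section Exact
variable [Preadditive C] [HasZeroObject C] [HasBinaryBiproducts C] [ExactStruct C]

def IsDeflation {X Y : C} (d : X ⟶ Y) : Prop :=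
  ∃ (K : C) (i : K ⟶ X), ExactStruct.IsConflation i d

def IsInflation {X Y : C} (i : X ⟶ Y) : Prop :=
  ∃ (Z : C) (d : Y ⟶ Z), ExactStruct.IsConflation i d

/-- projectively trivial morphisms: those factoring through every deflation onto the target. -/
def ProjTrivial {X Y : C} (f : X ⟶ Y) : Prop :=
  ∀ ⦃E : C⦄ (d : E ⟶ Y), IsDeflation d → ∃ g : X ⟶ E, f = g ≫ d

/-- injectively trivial morphisms: those factoring through every inflation from the source. -/
def InjTrivial {X Y : C} (f : X ⟶ Y) : Prop :=
  ∀ ⦃E : C⦄ (i : X ⟶ E), IsInflation i → ∃ g : E ⟶ Y, f = i ≫ g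

/-- `f` factors through `α` in the projectively stable category. -/
def StablyFactors {T X Y : C} (f : T ⟶ Y) (α : X ⟶ Y) : Prop :=
  ∃ g : T ⟶ X, ProjTrivial (f - g ≫ α)

/-- `α` is right `Cd`-determined in the projectively stable category. -/
def RightDeterminedStable {X Y : C} (α : X ⟶ Y) (Cd : C) : Prop :=
  ∀ ⦃T : C⦄ (g : T ⟶ Y), (∀ h : Cd ⟶ T, StablyFactors (h ≫ g) α) → StablyFactors g α

/-- `X ≅ Y` in the projectively stable category. -/
def StablyIso (X Y : C) : Prop :=
  ∃ (f : X ⟶ Y) (g : Y ⟶ X), ProjTrivial (f ≫ g - 𝟙 X) ∧ ProjTrivial (g ≫ f - 𝟙 Y)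

def ProjObj (P : C) : Prop :=
  ∀ ⦃E : C⦄ (d : E ⟶ P), IsDeflation d → ∃ s : P ⟶ E, s ≫ d = 𝟙 P

def InjObj (I : C) : Prop :=
  ∀ ⦃E : C⦄ (i : I ⟶ E), IsInflation i → ∃ r : E ⟶ I, i ≫ r = 𝟙 I

def AlmostSplitConflation {X E Y : C} (i : X ⟶ E) (d : E ⟶ Y) : Prop :=
  ExactStruct.IsConflation i d ∧ LeftAlmostSplit i ∧ RightAlmostSplit d

/-- membership in `𝒞_l`: every indecomposable direct summand is injective or is the first
term of an almost split conflation. -/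
def MemCl (K : C) : Prop :=
  ∀ Z : C, IsSummand Z K → Indec Z →
    InjObj Z ∨ ∃ (E W : C) (i : Z ⟶ E) (d : E ⟶ W), AlmostSplitConflation i d

/-- membership in `𝒞_r`: every indecomposable direct summand is projective or is the third
term of an almost split conflation. -/
def MemCr (X : C) : Prop :=
  ∀ Z : C, IsSummand Z X → Indec Z →
    ProjObj Z ∨ ∃ (K E : C) (i : K ⟶ E) (d : E ⟶ Z), AlmostSplitConflation i d

end Exact

/-- Krull–Schmidt: every object is a finite biproduct of objects with local endomorphism ring. -/
class KrullSchmidtCat (C : Type u) [Category.{v} C] [Preadditive C]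
    [HasFiniteBiproducts C] : Prop where
  decomp : ∀ X : C, ∃ (n : ℕ) (f : Fin n → C),
    (∀ i, IsLocalRing (CategoryTheory.End (f i))) ∧ Nonempty (X ≅ ⨁ f)


theorem stmt_0 [Preadditive C] [HasBinaryBiproducts C]
    {X₁ Y₁ X₂ Y₂ : C} (f₁ : X₁ ⟶ Y₁) (f₂ : X₂ ⟶ Y₂) (Cd : C) :
    RightDetermined (biprod.map f₁ f₂) Cd ↔
      (RightDetermined f₁ Cd ∧ RightDetermined f₂ Cd) := by
  constructor
  · intro hd
    constructor
    · intro T g hg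
      obtain ⟨t, ht⟩ := hd (g ≫ biprod.inl) (fun h => by
        obtain ⟨s, hs⟩ := hg h
        exact ⟨s ≫ biprod.inl, by simp [reassoc_of% hs]⟩)
      refine ⟨t ≫ biprod.fst, ?_⟩
      have := ht =≫ biprod.fst
      simpa using this
    · intro T g hg
      obtain ⟨t, ht⟩ := hd (g ≫ biprod.inr) (fun h => by
        obtain ⟨s, hs⟩ := hg h
        exact ⟨s ≫ biprod.inr, by simp [reassoc_of% hs]⟩)
      refine ⟨t ≫ biprod.snd, ?_⟩
      have := ht =≫ biprod.snd
      simpa using this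
  · rintro ⟨h1, h2⟩ T g hg
    obtain ⟨t₁, ht₁⟩ := h1 (g ≫ biprod.fst) (fun h => by
      obtain ⟨s, hs⟩ := hg h
      exact ⟨s ≫ biprod.fst, by simp [reassoc_of% hs]⟩)
    obtain ⟨t₂, ht₂⟩ := h2 (g ≫ biprod.snd) (fun h => by
      obtain ⟨s, hs⟩ := hg h
      exact ⟨s ≫ biprod.snd, by simp [reassoc_of% hs]⟩)
    refine ⟨biprod.lift t₁ t₂, ?_⟩
    apply biprod.hom_ext <;> simp [← ht₁, ← ht₂]
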